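/- Let S be a symmetric d×d real matrix with λ_min the smallest and λ_max the largest eigenvalue, v a unit eigenvector of S with eigenvalue λ. For any w ∈ ℝᵐ with ∑wᵢ = 1, ∑|wᵢ| ≤ c, and any δᵢ ∈ ℝᵈ with ∑wᵢδᵢ = 0 and ‖δᵢ‖ ≤ 1, we have ∑ᵢ wᵢ δᵢᵀ S δᵢ ≥ ((c+1)/2)·min(λ_min, 0) + ((1−c)/2)·max(λ_max, 0). -/

import Mathlib

open Matrix BigOperators

lemma quad_bounds (d : ℕ) (S : Matrix (Fin d) (Fin d) ℝ) (hS : S.IsSymm) (hA : S.IsHermitian)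
    (lmin lmax : ℝ) (hlo : ∀ k, lmin ≤ hA.eigenvalues k) (hhi : ∀ k, hA.eigenvalues k ≤ lmax)
    (x : Fin d → ℝ) (hx : x ⬝ᵥ x ≤ 1) :
    min lmin 0 ≤ x ⬝ᵥ S.mulVec x ∧ x ⬝ᵥ S.mulVec x ≤ max lmax 0 := by
  classical
  set B := hA.eigenvectorBasis with hB
  set x' : EuclideanSpace ℝ (Fin d) := WithLp.toLp 2 x with hx'
  set y' : EuclideanSpace ℝ (Fin d) := WithLp.toLp 2 (S.mulVec x) with hy'
  set cf : Fin d → ℝ := fun k => B.repr x' k with hcdef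
  have hinner : ∀ a b : EuclideanSpace ℝ (Fin d),
      (inner ℝ a b : ℝ) = (a : Fin d → ℝ) ⬝ᵥ (b : Fin d → ℝ) := by
    intro a b
    simp [EuclideanSpace.inner_eq_star_dotProduct, dotProduct, mul_comm]
  have hreprT : ∀ k, B.repr y' k = hA.eigenvalues k * cf k := by
    intro k
    rw [B.repr_apply_apply, hinner, hy', WithLp.ofLp_toLp]
    have hsym : (B k : Fin d → ℝ) ⬝ᵥ S.mulVec x = (S.mulVec (B k)) ⬝ᵥ x := by
      rw [Matrix.dotProduct_mulVec, ← Matrix.vecMul_transpose, hS.eq]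
    have he : S.mulVec (B k) = hA.eigenvalues k • (B k : Fin d → ℝ) :=
      hA.mulVec_eigenvectorBasis k
    rw [hsym, he, smul_dotProduct]
    rw [hcdef]; simp only [B.repr_apply_apply, hinner]
    rfl
  have hparseval : x ⬝ᵥ x = ∑ k, cf k * cf k := by
    have := B.repr.inner_map_map x' x'
    rw [hinner, hinner] at this
    rw [← this]
    rfl
  have hquad : x ⬝ᵥ S.mulVec x = ∑ k, hA.eigenvalues k * (cf k * cf k) := by
    have := B.repr.inner_map_map x' y'
    rw [hinner, hinner] at this
    have h2 : ((B.repr x' : Fin d → ℝ) ⬝ᵥ (B.repr y' : Fin d → ℝ))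
        = ∑ k, cf k * (hA.eigenvalues k * cf k) := by
      simp only [dotProduct]
      exact Finset.sum_congr rfl fun k _ => by rw [hreprT k]
    rw [h2] at this
    rw [show x ⬝ᵥ S.mulVec x = (x' : Fin d → ℝ) ⬝ᵥ (y' : Fin d → ℝ) from rfl, ← this]
    exact Finset.sum_congr rfl fun k _ => by ring
  have hsq : ∀ k, (0:ℝ) ≤ cf k * cf k := fun k => mul_self_nonneg _
  have hs0 : (0:ℝ) ≤ ∑ k, cf k * cf k := Finset.sum_nonneg fun k _ => hsq k
  have hs1 : ∑ k, cf k * cf k ≤ 1 := by rw [← hparseval]; exact hx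
  constructor
  · rw [hquad]
    have hlow : ∑ k, lmin * (cf k * cf k) ≤ ∑ k, hA.eigenvalues k * (cf k * cf k) :=
      Finset.sum_le_sum fun k _ => mul_le_mul_of_nonneg_right (hlo k) (hsq k)
    rw [← Finset.mul_sum] at hlow
    rcases le_or_gt lmin 0 with h | h
    · have : min lmin 0 = lmin := min_eq_left h
      nlinarith
    · have : min lmin 0 = 0 := min_eq_right h.le
      nlinarith
  · rw [hquad]
    have hup : ∑ k, hA.eigenvalues k * (cf k * cf k) ≤ ∑ k, lmax * (cf k * cf k) :=
      Finset.sum_le_sum fun k _ => mul_le_mul_of_nonneg_right (hhi k) (hsq k)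
    rw [← Finset.mul_sum] at hup
    rcases le_or_gt 0 lmax with h | h
    · have : max lmax 0 = lmax := max_eq_left h
      nlinarith
    · have : max lmax 0 = 0 := max_eq_right h.le
      nlinarith
theorem stmt_9 (d m : ℕ) (c : ℝ) (hc : 1 ≤ c)
    (S : Matrix (Fin d) (Fin d) ℝ) (hS : S.IsSymm) (lmin lmax : ℝ)
    (hmin : IsLeast {μ : ℝ | ∃ v : Fin d → ℝ, v ≠ 0 ∧ S.mulVec v = μ • v} lmin)
    (hmax : IsGreatest {μ : ℝ | ∃ v : Fin d → ℝ, v ≠ 0 ∧ S.mulVec v = μ • v} lmax)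
    (lam : ℝ) (v : Fin d → ℝ) (hv : v ⬝ᵥ v = 1) (hev : S.mulVec v = lam • v)
    (w : Fin m → ℝ) (δ : Fin m → Fin d → ℝ)
    (hw1 : ∑ i, w i = 1) (hwc : ∑ i, |w i| ≤ c)
    (hδ0 : ∑ i, w i • δ i = 0) (hδn : ∀ i, δ i ⬝ᵥ δ i ≤ 1) :
    (c + 1) / 2 * min lmin 0 + (1 - c) / 2 * max lmax 0 ≤
      ∑ i, w i * (δ i ⬝ᵥ S.mulVec (δ i)) := by
  classical
  have hA : S.IsHermitian := by
    rwa [Matrix.IsHermitian, Matrix.conjTranspose_eq_transpose_of_trivial]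
  have hvk : ∀ k, (hA.eigenvectorBasis k : Fin d → ℝ) ≠ 0 := by
    intro k h
    have h1 := hA.eigenvectorBasis.orthonormal.1 k
    rw [show (hA.eigenvectorBasis k) = (0 : EuclideanSpace ℝ (Fin d)) from WithLp.ofLp_injective 2 (h.trans (WithLp.ofLp_zero 2).symm)] at h1
    simp at h1
  have hlo : ∀ k, lmin ≤ hA.eigenvalues k := fun k =>
    hmin.2 ⟨_, hvk k, hA.mulVec_eigenvectorBasis k⟩
  have hhi : ∀ k, hA.eigenvalues k ≤ lmax := fun k =>
    hmax.2 ⟨_, hvk k, hA.mulVec_eigenvectorBasis k⟩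
  have hb : ∀ i, min lmin 0 ≤ δ i ⬝ᵥ S.mulVec (δ i) ∧
      δ i ⬝ᵥ S.mulVec (δ i) ≤ max lmax 0 := fun i =>
    quad_bounds d S hS hA lmin lmax hlo hhi (δ i) (hδn i)
  have hmn : min lmin 0 ≤ 0 := min_le_right _ _
  have hmx : (0:ℝ) ≤ max lmax 0 := le_max_right _ _
  have hterm : ∀ i, (w i + |w i|)/2 * min lmin 0 + (w i - |w i|)/2 * max lmax 0 ≤
      w i * (δ i ⬝ᵥ S.mulVec (δ i)) := by
    intro i
    obtain ⟨hl, hr⟩ := hb i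
    rcases abs_cases (w i) with ⟨h1, h2⟩ | ⟨h1, h2⟩ <;> nlinarith
  have hsum : ∑ i, ((w i + |w i|)/2 * min lmin 0 + (w i - |w i|)/2 * max lmax 0) ≤
      ∑ i, w i * (δ i ⬝ᵥ S.mulVec (δ i)) :=
    Finset.sum_le_sum fun i _ => hterm i
  have e : ∑ i, ((w i + |w i|)/2 * min lmin 0 + (w i - |w i|)/2 * max lmax 0)
      = (1 + ∑ i, |w i|)/2 * min lmin 0 + (1 - ∑ i, |w i|)/2 * max lmax 0 := by
    rw [Finset.sum_add_distrib, ← Finset.sum_mul, ← Finset.sum_mul, ← Finset.sum_div,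
      ← Finset.sum_div, Finset.sum_add_distrib, Finset.sum_sub_distrib, hw1]
  rw [e] at hsum
  nlinarith [hsum, hmn, hmx, hwc]
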